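/- Let ρ and σ be d×d density matrices with all entries of ρ nonzero, and suppose there exists a cooling map E with E(ρ) = σ. Then (a) the diagonal of ρ UT-majorizes that of σ, and (b) the matrix Q defined by Q_{jj} = min(σ_{jj}/ρ_{jj}, 1) and Q_{jk} = σ_{jk}/ρ_{jk} (j ≠ k) is positive-semidefinite. -/

import Mathlib

open Finset Matrix
open scoped ComplexOrder

/-- A cooling map: a trace-preserving map admitting a Kraus decomposition into
diagonal operators and multiples of matrix units `|j⟩⟨k|` with `j < k`. -/
def IsCoolingMap {d : ℕ} (E : Matrix (Fin d) (Fin d) ℂ → Matrix (Fin d) (Fin d) ℂ) : Prop :=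
  ∃ (n : ℕ) (lam : Fin d → Fin n → ℂ) (mu : Fin d → Fin d → ℂ),
    (∀ ρ, E ρ =
      (∑ i, (Matrix.diagonal fun j => lam j i) * ρ * (Matrix.diagonal fun j => lam j i)ᴴ) +
      ∑ j, ∑ k, if j < k then
        (mu j k • Matrix.single j k (1 : ℂ)) * ρ *
          (mu j k • Matrix.single j k (1 : ℂ))ᴴ
      else 0) ∧
    (∀ ρ, (E ρ).trace = ρ.trace)

theorem cooling_map_transition_necessary
    (d : ℕ) (ρ σ : Matrix (Fin d) (Fin d) ℂ)
    (hρ : ρ.PosSemidef) (hρtr : ρ.trace = 1)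
    (hσ : σ.PosSemidef) (hσtr : σ.trace = 1)
    (hρne : ∀ j k, ρ j k ≠ 0)
    (E : Matrix (Fin d) (Fin d) ℂ → Matrix (Fin d) (Fin d) ℂ)
    (hE : IsCoolingMap E) (hEρ : E ρ = σ)
    (Q : Matrix (Fin d) (Fin d) ℂ)
    (hQ : ∀ j k : Fin d, Q j k =
      if j = k then ((min ((σ j j).re / (ρ j j).re) 1 : ℝ) : ℂ)
      else σ j k / ρ j k) :
    (∀ m : Fin d, 1 ≤ m.val →
      ∑ j ∈ univ.filter (fun j => m ≤ j), (σ j j).re ≤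
        ∑ j ∈ univ.filter (fun j => m ≤ j), (ρ j j).re) ∧
    Q.PosSemidef := by
  obtain ⟨n, lam, mu, hmap, htr⟩ := hE
  set w : Fin d → Fin d → ℂ := fun j k => mu j k * star (mu j k) with hwdef
  set q : Matrix (Fin d) (Fin d) ℂ :=
    Matrix.of (fun j k => ∑ i, lam j i * star (lam k i)) with hqdef
  -- entrywise formula for E
  have key : ∀ (X : Matrix (Fin d) (Fin d) ℂ) (a b : Fin d),
      E X a b = q a b * X a b +
        (if a = b then ∑ k ∈ univ.filter (fun k => a < k), w a k * X k k else 0) := by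
    intro X a b
    have h1 : ∀ i : Fin n,
        ((Matrix.diagonal fun j => lam j i) * X * (Matrix.diagonal fun j => lam j i)ᴴ) a b
          = lam a i * star (lam b i) * X a b := by
      intro i
      rw [diagonal_conjTranspose, Matrix.mul_apply]
      simp [Matrix.diagonal_apply, Matrix.mul_apply, Finset.sum_ite_eq, Finset.sum_ite_eq',
        mul_comm, mul_assoc, mul_left_comm]
    have h2 : ∀ j k : Fin d,
        ((mu j k • Matrix.single j k (1 : ℂ)) * X *
            (mu j k • Matrix.single j k (1 : ℂ))ᴴ) a b
          = if a = j ∧ b = j then w j k * X k k else 0 := by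
      intro j k
      simp only [conjTranspose_smul, Matrix.smul_mul, Matrix.mul_smul, Matrix.smul_apply]
      rw [Matrix.mul_apply]
      simp only [Matrix.mul_apply, Matrix.single, Matrix.conjTranspose_apply,
        Matrix.of_apply, ite_mul, mul_ite, one_mul, mul_one, zero_mul, mul_zero,
        apply_ite star, star_zero, star_one, smul_eq_mul]
      simp only [Finset.sum_ite_eq, Finset.sum_ite_eq', Finset.mem_univ, if_true, ite_and,
        mul_ite, mul_zero, Finset.sum_ite_eq']
      simp [Finset.sum_ite_eq, Finset.sum_ite_eq', eq_comm (a := a), eq_comm (a := b), hwdef]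
      split_ifs <;> ring
    rw [hmap X, Matrix.add_apply]
    congr 1
    · rw [Matrix.sum_apply]
      rw [Finset.sum_congr rfl fun i _ => h1 i, ← Finset.sum_mul]
      rfl
    · rw [Matrix.sum_apply]
      have hinner : ∀ j : Fin d,
          (∑ k, if j < k then
            (mu j k • Matrix.single j k (1 : ℂ)) * X *
              (mu j k • Matrix.single j k (1 : ℂ))ᴴ else 0) a b
          = if a = j ∧ b = j then ∑ k, (if j < k then w j k * X k k else 0) else 0 := by
        intro j
        rw [Matrix.sum_apply]
        by_cases hj : a = j ∧ b = j
        · rw [if_pos hj]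
          refine Finset.sum_congr rfl fun k _ => ?_
          by_cases hlt : j < k
          · rw [if_pos hlt, if_pos hlt, h2, if_pos hj]
          · rw [if_neg hlt, if_neg hlt, Matrix.zero_apply]
        · rw [if_neg hj]
          refine Finset.sum_eq_zero fun k _ => ?_
          by_cases hlt : j < k
          · rw [if_pos hlt, h2, if_neg hj]
          · rw [if_neg hlt, Matrix.zero_apply]
      rw [Finset.sum_congr rfl fun j _ => hinner j]
      by_cases hab : a = b
      · subst hab
        rw [if_pos rfl]
        have : ∀ j : Fin d, (if a = j ∧ a = j then ∑ k, (if j < k then w j k * X k k else 0) else 0)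
            = if a = j then ∑ k, (if j < k then w j k * X k k else 0) else 0 := by
          intro j; split_ifs with h1' h2' <;> tauto
        rw [Finset.sum_congr rfl fun j _ => this j, Finset.sum_ite_eq, if_pos (Finset.mem_univ a),
          Finset.sum_filter]
      · rw [if_neg hab]
        refine Finset.sum_eq_zero fun j _ => ?_
        rw [if_neg]
        rintro ⟨rfl, rfl⟩; exact hab rfl
  -- σ entries
  have hσe : ∀ a b : Fin d, σ a b = q a b * ρ a b +
      (if a = b then ∑ k ∈ univ.filter (fun k => a < k), w a k * ρ k k else 0) := by
    intro a b; rw [← hEρ, key]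
  -- trace identity
  have htrace : ∀ m : Fin d,
      q m m + ∑ j ∈ univ.filter (fun j => j < m), w j m = 1 := by
    intro m
    have h := htr (Matrix.single m m 1)
    rw [Matrix.trace, Matrix.trace] at h
    have hX : ∀ a b : Fin d, Matrix.single m m (1 : ℂ) a b
        = if m = a ∧ m = b then 1 else 0 := by
      intro a b; rfl
    have hdiag : ∀ a : Fin d, Matrix.single m m (1 : ℂ) a a = if m = a then 1 else 0 := by
      intro a; rw [hX]; split_ifs with h1' h2' <;> tauto
    have hEdiag : ∑ a, Matrix.diag (E (Matrix.single m m 1)) a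
        = q m m + ∑ j ∈ univ.filter (fun j => j < m), w j m := by
      have : ∀ a : Fin d, Matrix.diag (E (Matrix.single m m 1)) a
          = q a a * (if m = a then 1 else 0) +
            ∑ k ∈ univ.filter (fun k => a < k), w a k * (if m = k then 1 else 0) := by
        intro a
        rw [Matrix.diag, key, if_pos rfl, hdiag]
        congr 1
        refine Finset.sum_congr rfl fun k _ => ?_
        rw [hdiag]
      rw [Finset.sum_congr rfl fun a _ => this a, Finset.sum_add_distrib]
      congr 1
      · simp [mul_ite, Finset.sum_ite_eq, Finset.sum_ite_eq']
      · have hone : ∀ a : Fin d,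
            ∑ k ∈ univ.filter (fun k => a < k), w a k * (if m = k then 1 else 0)
              = if a < m then w a m else 0 := by
          intro a
          rw [Finset.sum_filter]
          have h' : ∀ k : Fin d, (if a < k then w a k * (if m = k then 1 else 0) else 0)
              = if m = k then (if a < k then w a k else 0) else 0 := by
            intro k; split_ifs <;> ring
          rw [Finset.sum_congr rfl fun k _ => h' k, Finset.sum_ite_eq,
            if_pos (Finset.mem_univ m)]
        rw [Finset.sum_congr rfl fun a _ => hone a, ← Finset.sum_filter]
    have hXtr : ∑ a, Matrix.diag (Matrix.single m m (1 : ℂ)) a = 1 := by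
      have : ∀ a : Fin d, Matrix.diag (Matrix.single m m (1 : ℂ)) a
          = if m = a then 1 else 0 := fun a => hdiag a
      rw [Finset.sum_congr rfl fun a _ => this a, Finset.sum_ite_eq, if_pos (Finset.mem_univ m)]
    rw [hEdiag, hXtr] at h
    exact h
  -- real quantities
  set Rd : Fin d → ℝ := fun j => (ρ j j).re with hRddef
  set Sd : Fin d → ℝ := fun j => (σ j j).re with hSddef
  set Qd : Fin d → ℝ := fun j => ∑ i, Complex.normSq (lam j i) with hQddef
  set Wr : Fin d → Fin d → ℝ := fun j k => Complex.normSq (mu j k) with hWrdef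
  have hRc : ∀ j, ρ j j = (Rd j : ℂ) := fun j => (hρ.1.coe_re_apply_self j).symm
  have hSc : ∀ j, σ j j = (Sd j : ℂ) := fun j => (hσ.1.coe_re_apply_self j).symm
  have hqc : ∀ j, q j j = (Qd j : ℂ) := by
    intro j
    simp only [hqdef, Matrix.of_apply, hQddef]
    push_cast
    exact Finset.sum_congr rfl fun i _ => (Complex.mul_conj _).symm ▸ rfl
  have hwc : ∀ j k, w j k = (Wr j k : ℂ) := by
    intro j k
    simp only [hwdef, hWrdef]
    exact (Complex.mul_conj _).symm ▸ rfl
  have hWnn : ∀ j k, 0 ≤ Wr j k := fun j k => Complex.normSq_nonneg _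
  have hQnn : ∀ j, 0 ≤ Qd j := fun j => Finset.sum_nonneg fun i _ => Complex.normSq_nonneg _
  have hSd : ∀ j, Sd j = Qd j * Rd j + ∑ k ∈ univ.filter (fun k => j < k), Wr j k * Rd k := by
    intro j
    have h := hσe j j
    rw [if_pos rfl, hSc j, hqc j, hRc j] at h
    have h2 : ∑ k ∈ univ.filter (fun k => j < k), w j k * ρ k k
        = ((∑ k ∈ univ.filter (fun k => j < k), Wr j k * Rd k : ℝ) : ℂ) := by
      push_cast
      exact Finset.sum_congr rfl fun k _ => by rw [hwc, hRc]
    rw [h2] at h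
    exact_mod_cast h
  have htr' : ∀ m : Fin d, Qd m + ∑ j ∈ univ.filter (fun j => j < m), Wr j m = 1 := by
    intro m
    have h := htrace m
    rw [hqc m] at h
    have h2 : ∑ j ∈ univ.filter (fun j => j < m), w j m
        = ((∑ j ∈ univ.filter (fun j => j < m), Wr j m : ℝ) : ℂ) := by
      push_cast
      exact Finset.sum_congr rfl fun j _ => hwc j m
    rw [h2] at h
    exact_mod_cast h
  have hRnn : ∀ j, 0 ≤ Rd j := by
    intro j
    have h := hρ.dotProduct_mulVec_nonneg (Pi.single j 1)
    have h2 : star (Pi.single j 1) ⬝ᵥ ρ *ᵥ Pi.single j (1 : ℂ) = ρ j j := by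
      simp [Matrix.mulVec, dotProduct, Pi.single_apply, apply_ite star,
        Finset.sum_ite_eq, Finset.sum_ite_eq', mul_comm]
    rw [h2] at h
    have := (Complex.le_def.mp h).1
    simpa using this
  have hRpos : ∀ j, 0 < Rd j := by
    intro j
    rcases lt_or_eq_of_le (hRnn j) with h | h
    · exact h
    · exact absurd (by rw [hRc j, ← h]; simp) (hρne j j)
  -- part (a)
  have parta : ∀ m : Fin d, 1 ≤ m.val →
      ∑ j ∈ univ.filter (fun j => m ≤ j), (σ j j).re ≤
        ∑ j ∈ univ.filter (fun j => m ≤ j), (ρ j j).re := by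
    intro m _
    have hexp : ∀ j : Fin d, Sd j =
        Rd j - ∑ a ∈ univ.filter (fun a => a < j), Wr a j * Rd j
          + ∑ k ∈ univ.filter (fun k => j < k), Wr j k * Rd k := by
      intro j
      have h1 := hSd j
      have h2 := htr' j
      have h3 : Qd j * Rd j = Rd j - ∑ a ∈ univ.filter (fun a => a < j), Wr a j * Rd j := by
        have : Qd j = 1 - ∑ a ∈ univ.filter (fun a => a < j), Wr a j := by linarith
        rw [this, sub_mul, one_mul, Finset.sum_mul]
      rw [h3] at h1
      exact h1
    have hdouble :
        ∑ j ∈ univ.filter (fun j => m ≤ j), ∑ k ∈ univ.filter (fun k => j < k), Wr j k * Rd k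
          ≤ ∑ j ∈ univ.filter (fun j => m ≤ j),
              ∑ a ∈ univ.filter (fun a => a < j), Wr a j * Rd j := by
      have hL : ∑ j ∈ univ.filter (fun j => m ≤ j),
            ∑ k ∈ univ.filter (fun k => j < k), Wr j k * Rd k
          = ∑ j : Fin d, ∑ k : Fin d,
              if m ≤ j ∧ j < k then Wr j k * Rd k else 0 := by
        rw [Finset.sum_filter]
        refine Finset.sum_congr rfl fun j _ => ?_
        rw [Finset.sum_filter]
        by_cases h : m ≤ j
        · simp [h]
        · simp [h]
      have hR : ∑ j ∈ univ.filter (fun j => m ≤ j),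
            ∑ a ∈ univ.filter (fun a => a < j), Wr a j * Rd j
          = ∑ a : Fin d, ∑ j : Fin d,
              if a < j ∧ m ≤ j then Wr a j * Rd j else 0 := by
        rw [Finset.sum_comm]
        rw [Finset.sum_filter]
        refine Finset.sum_congr rfl fun j _ => ?_
        rw [Finset.sum_filter]
        by_cases h : m ≤ j
        · simp [h, and_comm]
        · simp [h]
      rw [hL, hR]
      refine Finset.sum_le_sum fun x _ => Finset.sum_le_sum fun y _ => ?_
      by_cases h1 : m ≤ x ∧ x < y
      · rw [if_pos h1, if_pos ⟨h1.2, le_trans h1.1 h1.2.le⟩]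
      · rw [if_neg h1]
        split_ifs with h2
        · exact mul_nonneg (hWnn x y) (hRnn y)
        · exact le_refl 0
    calc ∑ j ∈ univ.filter (fun j => m ≤ j), (σ j j).re
        = ∑ j ∈ univ.filter (fun j => m ≤ j), Sd j := rfl
      _ = ∑ j ∈ univ.filter (fun j => m ≤ j), Rd j
            - ∑ j ∈ univ.filter (fun j => m ≤ j),
                ∑ a ∈ univ.filter (fun a => a < j), Wr a j * Rd j
            + ∑ j ∈ univ.filter (fun j => m ≤ j),
                ∑ k ∈ univ.filter (fun k => j < k), Wr j k * Rd k := by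
          rw [Finset.sum_congr rfl fun j _ => hexp j, Finset.sum_add_distrib,
            Finset.sum_sub_distrib]
      _ ≤ ∑ j ∈ univ.filter (fun j => m ≤ j), Rd j := by linarith
  refine ⟨parta, ?_⟩
  -- part (b)
  have hqpsd : q.PosSemidef := by
    have : q = (Matrix.of lam) * (Matrix.of lam)ᴴ := by
      ext j k
      simp [hqdef, Matrix.mul_apply, Matrix.conjTranspose_apply]
    rw [this]
    exact Matrix.posSemidef_self_mul_conjTranspose _
  set D : Fin d → ℂ := fun j => ((min (Sd j / Rd j) 1 - Qd j : ℝ) : ℂ) with hDdef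
  have hQeq : Q = q + Matrix.diagonal D := by
    ext j k
    rw [hQ j k, Matrix.add_apply, Matrix.diagonal_apply]
    by_cases h : j = k
    · subst h
      rw [if_pos rfl, if_pos rfl, hqc j, hDdef]
      push_cast
      ring
    · rw [if_neg h, if_neg h, add_zero]
      have hσjk := hσe j k
      rw [if_neg h, add_zero] at hσjk
      rw [hσjk, mul_div_assoc, div_self (hρne j k), mul_one]
  have hDnn : ∀ j, 0 ≤ D j := by
    intro j
    rw [hDdef]
    rw [Complex.zero_le_real]
    have h1 : Qd j ≤ 1 := by
      have := htr' j
      have hs : 0 ≤ ∑ a ∈ univ.filter (fun a => a < j), Wr a j :=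
        Finset.sum_nonneg fun a _ => hWnn a j
      linarith
    have h2 : Qd j ≤ Sd j / Rd j := by
      rw [le_div_iff₀ (hRpos j)]
      have hs : 0 ≤ ∑ k ∈ univ.filter (fun k => j < k), Wr j k * Rd k :=
        Finset.sum_nonneg fun k _ => mul_nonneg (hWnn j k) (hRnn k)
      have := hSd j
      linarith
    have := le_min h2 h1
    linarith
  have hDpsd : (Matrix.diagonal D).PosSemidef :=
    Matrix.PosSemidef.diagonal hDnn
  rw [hQeq]
  exact hqpsd.add hDpsd
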